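/- Let k > 0, α ≥ 0, γ ∈ [0,1) and T > 0. Then there is a finite constant C (depending only on k, γ, α, T) such that for all 0 ≤ s ≤ t ≤ T and every measurable function g : ℝ^d → ℂ, ∫_{ℝ^d} (1 + ‖ξ‖²)^{α} (sin(t‖ξ‖^k) − sin(s‖ξ‖^k))² / ‖ξ‖^{2k} |g(ξ)|² dξ ≤ C (t − s)^{2(1−γ)} ∫_{ℝ^d} (1 + ‖ξ‖²)^{α − kγ} |g(ξ)|² dξ, both sides taking values in [0,∞]. (Taking g = 𝓕ṽ₀, this gives the H^α_2 Hölder estimate ‖G(t)*ṽ₀ − G(s)*ṽ₀‖²_{H^α_2} ≤ C(t−s)^{2(1−γ)}‖ṽ₀‖²_{H^{−(kγ−α)}_2} for the contribution of the initial velocity ṽ₀.) -/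

import Mathlib

open Real MeasureTheory

/-- interpolation: `min a b ≤ a^(1-γ) * b^γ` for nonneg `a,b` and `γ ∈ [0,1]`. -/
lemma min_le_rpow_interp {a b γ : ℝ} (ha : 0 ≤ a) (hb : 0 ≤ b)
    (hγ0 : 0 ≤ γ) (hγ1 : γ ≤ 1) :
    min a b ≤ a ^ (1 - γ) * b ^ γ := by
  rcases le_total a b with h | h
  · rw [min_eq_left h]
    calc a = a ^ ((1 - γ) + γ) := by norm_num
    _ = a ^ (1 - γ) * a ^ γ := Real.rpow_add' ha (by norm_num)
    _ ≤ a ^ (1 - γ) * b ^ γ :=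
        mul_le_mul_of_nonneg_left (Real.rpow_le_rpow ha h hγ0)
          (Real.rpow_nonneg ha _)
  · rw [min_eq_right h]
    calc b = b ^ ((1 - γ) + γ) := by norm_num
    _ = b ^ (1 - γ) * b ^ γ := Real.rpow_add' hb (by norm_num)
    _ ≤ a ^ (1 - γ) * b ^ γ :=
        mul_le_mul_of_nonneg_right (Real.rpow_le_rpow hb h (by linarith))
          (Real.rpow_nonneg hb _)

/-- `|sin x - sin y| ≤ |x - y|`. -/
lemma abs_sin_sub_sin_le (x y : ℝ) : |Real.sin x - Real.sin y| ≤ |x - y| := by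
  rw [Real.sin_sub_sin]
  calc |2 * Real.sin ((x - y) / 2) * Real.cos ((x + y) / 2)|
      = 2 * |Real.sin ((x - y) / 2)| * |Real.cos ((x + y) / 2)| := by
        rw [abs_mul, abs_mul]; norm_num
    _ ≤ 2 * |(x - y) / 2| * 1 := by
        apply mul_le_mul
          (mul_le_mul_of_nonneg_left Real.abs_sin_le_abs (by norm_num))
          (Real.abs_cos_le_one _) (abs_nonneg _) (by positivity)
    _ = |x - y| := by rw [mul_one, abs_div, abs_two]; ring

lemma abs_sin_sub_sin_le_two (x y : ℝ) : |Real.sin x - Real.sin y| ≤ 2 := by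
  calc |Real.sin x - Real.sin y| ≤ |Real.sin x| + |Real.sin y| := abs_sub _ _
  _ ≤ 1 + 1 := add_le_add (Real.abs_sin_le_one x) (Real.abs_sin_le_one y)
  _ = 2 := by norm_num

/-- The main pointwise estimate. -/
lemma ptwise_est (k γ T s t r : ℝ) (hk : 0 < k) (hγ0 : 0 ≤ γ) (hγ1 : γ < 1)
    (hT : 0 < T) (hs : 0 ≤ s) (hst : s ≤ t) (htT : t ≤ T) (hr : 0 ≤ r) :
    (Real.sin (t * r ^ k) - Real.sin (s * r ^ k)) ^ 2 / r ^ (2 * k)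
      ≤ (2 ^ (k * γ + 2 * γ) * (1 + T) ^ (2 * γ)) * (t - s) ^ (2 * (1 - γ))
          * (1 + r ^ 2) ^ (-(k * γ)) := by
  have hts : 0 ≤ t - s := by linarith
  have h1r : (0:ℝ) < 1 + r ^ 2 := by positivity
  -- trivial case t = s
  rcases eq_or_lt_of_le hst with rfl | hst'
  · simp only [sub_self]
    rw [zero_pow (two_ne_zero), zero_div]
    positivity
  have htspos : 0 < t - s := by linarith
  rcases eq_or_lt_of_le hr with rfl | hr'
  · rw [Real.zero_rpow hk.ne']
    simp only [mul_zero, Real.sin_zero, sub_self]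
    rw [zero_pow (two_ne_zero), zero_div]
    positivity
  -- now r > 0
  set u : ℝ := r ^ k with hu_def
  have hu0 : 0 < u := Real.rpow_pos_of_pos hr' k
  have hr2k : r ^ (2 * k) = u ^ 2 := by
    rw [show (2:ℝ) * k = k * 2 by ring, Real.rpow_mul hr, Real.rpow_two]
  set D : ℝ := Real.sin (t * u) - Real.sin (s * u) with hD_def
  have hD1 : |D| ≤ (t - s) * u := by
    calc |D| ≤ |t * u - s * u| := _root_.abs_sin_sub_sin_le _ _
    _ = (t - s) * u := by
        rw [← sub_mul, abs_of_nonneg (by positivity)]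
  have hD2 : |D| ≤ 2 := abs_sin_sub_sin_le_two _ _
  have hDsq1 : D ^ 2 ≤ ((t - s) * u) ^ 2 := by
    rw [← sq_abs]; exact pow_le_pow_left₀ (abs_nonneg _) hD1 2
  have hDsq2 : D ^ 2 ≤ 4 := by
    rw [← sq_abs]; nlinarith [abs_nonneg D]
  have hP : (0:ℝ) < (1 + r ^ 2) ^ (k * γ) := Real.rpow_pos_of_pos h1r _
  have hkγ : 0 ≤ k * γ := by positivity
  have hC2 : (1:ℝ) ≤ (1 + T) ^ (2 * γ) :=
    Real.one_le_rpow (by linarith) (by positivity)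
  have h2split : (2:ℝ) ^ (k * γ + 2 * γ) = 2 ^ (k * γ) * 2 ^ (2 * γ) :=
    Real.rpow_add (by norm_num) _ _
  have h8 : (0:ℝ) ≤ (t - s) ^ (2 * (1 - γ)) := Real.rpow_nonneg hts _
  have h6 : (0:ℝ) ≤ (2:ℝ) ^ (k * γ) := by positivity
  have h7 : (0:ℝ) ≤ (1 + T) ^ (2 * γ) := by positivity
  have h5 : (1:ℝ) ≤ (2:ℝ) ^ (2 * γ) :=
    Real.one_le_rpow (by norm_num) (by positivity)
  -- master inequality
  have master : D ^ 2 * (1 + r ^ 2) ^ (k * γ)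
      ≤ (2 ^ (k * γ + 2 * γ) * (1 + T) ^ (2 * γ)) * (t - s) ^ (2 * (1 - γ)) * u ^ 2 := by
    rcases le_total r 1 with hr1 | hr1
    · -- small r : use |D| ≤ (t-s) u and 1 + r² ≤ 2
      have hP2 : (1 + r ^ 2) ^ (k * γ) ≤ 2 ^ (k * γ) :=
        Real.rpow_le_rpow h1r.le (by nlinarith) hkγ
      have hts2 : (t - s) ^ 2 ≤ (1 + T) ^ (2 * γ) * (t - s) ^ (2 * (1 - γ)) := by
        have he : (t - s) ^ 2 = (t - s) ^ (2 * (1 - γ)) * (t - s) ^ (2 * γ) := by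
          rw [← Real.rpow_add htspos, ← Real.rpow_two]
          congr 1; ring
        rw [he]
        have h3 : (t - s) ^ (2 * γ) ≤ (1 + T) ^ (2 * γ) :=
          Real.rpow_le_rpow hts (by linarith) (by positivity)
        calc (t - s) ^ (2 * (1 - γ)) * (t - s) ^ (2 * γ)
            ≤ (t - s) ^ (2 * (1 - γ)) * (1 + T) ^ (2 * γ) :=
              mul_le_mul_of_nonneg_left h3 h8
          _ = (1 + T) ^ (2 * γ) * (t - s) ^ (2 * (1 - γ)) := by ring
      have h4 : D ^ 2 * (1 + r ^ 2) ^ (k * γ) ≤ ((t - s) * u) ^ 2 * 2 ^ (k * γ) :=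
        mul_le_mul hDsq1 hP2 hP.le (by positivity)
      have h9 := mul_le_mul_of_nonneg_right
        (mul_le_mul_of_nonneg_left hts2 h6) (sq_nonneg u)
      have hnn : (0:ℝ) ≤ 2 ^ (k * γ) * ((1 + T) ^ (2 * γ) * (t - s) ^ (2 * (1 - γ))) * u ^ 2 :=
        mul_nonneg (mul_nonneg h6 (mul_nonneg h7 h8)) (sq_nonneg u)
      calc D ^ 2 * (1 + r ^ 2) ^ (k * γ) ≤ ((t - s) * u) ^ 2 * 2 ^ (k * γ) := h4
        _ = 2 ^ (k * γ) * (t - s) ^ 2 * u ^ 2 := by ring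
        _ ≤ 2 ^ (k * γ) * ((1 + T) ^ (2 * γ) * (t - s) ^ (2 * (1 - γ))) * u ^ 2 := h9
        _ ≤ 2 ^ (2 * γ) *
            (2 ^ (k * γ) * ((1 + T) ^ (2 * γ) * (t - s) ^ (2 * (1 - γ))) * u ^ 2) :=
              le_mul_of_one_le_left hnn h5
        _ = (2 ^ (k * γ + 2 * γ) * (1 + T) ^ (2 * γ)) * (t - s) ^ (2 * (1 - γ)) * u ^ 2 := by
            rw [h2split]; ring
    · -- large r : interpolation
      have hu1 : (1:ℝ) ≤ u := Real.one_le_rpow hr1 hk.le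
      have hmin : D ^ 2 ≤ (((t - s) * u) ^ 2) ^ (1 - γ) * (4:ℝ) ^ γ :=
        le_trans (le_min hDsq1 hDsq2)
          (min_le_rpow_interp (by positivity) (by norm_num) hγ0 hγ1.le)
      have hx : (0:ℝ) ≤ (t - s) * u := by positivity
      have hinterp : (((t - s) * u) ^ 2) ^ (1 - γ)
          = (t - s) ^ (2 * (1 - γ)) * u ^ (2 * (1 - γ)) := by
        rw [← Real.rpow_two ((t - s) * u), ← Real.rpow_mul hx,
          Real.mul_rpow hts hu0.le]
      have h4γ : (4:ℝ) ^ γ = 2 ^ (2 * γ) := by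
        rw [show (4:ℝ) = 2 ^ (2:ℝ) by rw [Real.rpow_two]; norm_num,
          ← Real.rpow_mul (by norm_num : (0:ℝ) ≤ 2)]
      have hP2 : (1 + r ^ 2) ^ (k * γ) ≤ 2 ^ (k * γ) * u ^ (2 * γ) := by
        have h12 : (1:ℝ) + r ^ 2 ≤ 2 * r ^ 2 := by nlinarith
        calc (1 + r ^ 2) ^ (k * γ) ≤ (2 * r ^ 2) ^ (k * γ) :=
              Real.rpow_le_rpow h1r.le h12 hkγ
          _ = 2 ^ (k * γ) * (r ^ 2) ^ (k * γ) :=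
              Real.mul_rpow (by norm_num) (by positivity)
          _ = 2 ^ (k * γ) * u ^ (2 * γ) := by
              rw [← Real.rpow_two r, ← Real.rpow_mul hr, hu_def,
                ← Real.rpow_mul hr]
              congr 1
              ring
      have husum : u ^ (2 * (1 - γ)) * u ^ (2 * γ) = u ^ 2 := by
        rw [← Real.rpow_add hu0, ← Real.rpow_two]
        congr 1; ring
      have hDP : D ^ 2 * (1 + r ^ 2) ^ (k * γ)
          ≤ ((t - s) ^ (2 * (1 - γ)) * u ^ (2 * (1 - γ)) * 2 ^ (2 * γ))
              * (2 ^ (k * γ) * u ^ (2 * γ)) := by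
        have hL : D ^ 2 ≤ (t - s) ^ (2 * (1 - γ)) * u ^ (2 * (1 - γ)) * 2 ^ (2 * γ) := by
          rw [← hinterp, ← h4γ]; exact hmin
        have hR : (0:ℝ) ≤ 2 ^ (k * γ) * u ^ (2 * γ) := by positivity
        exact mul_le_mul hL hP2 hP.le
          (le_trans (sq_nonneg D) (le_trans hL le_rfl) |> fun _ => by positivity)
      have hnn2 : (0:ℝ) ≤ 2 ^ (k * γ + 2 * γ) * (t - s) ^ (2 * (1 - γ)) * u ^ 2 :=
        mul_nonneg (mul_nonneg (by positivity) h8) (sq_nonneg u)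
      calc D ^ 2 * (1 + r ^ 2) ^ (k * γ)
          ≤ ((t - s) ^ (2 * (1 - γ)) * u ^ (2 * (1 - γ)) * 2 ^ (2 * γ))
              * (2 ^ (k * γ) * u ^ (2 * γ)) := hDP
        _ = (2 ^ (k * γ) * 2 ^ (2 * γ)) * (t - s) ^ (2 * (1 - γ))
              * (u ^ (2 * (1 - γ)) * u ^ (2 * γ)) := by ring
        _ = 2 ^ (k * γ + 2 * γ) * (t - s) ^ (2 * (1 - γ)) * u ^ 2 := by
            rw [husum, h2split]
        _ ≤ (1 + T) ^ (2 * γ) *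
            (2 ^ (k * γ + 2 * γ) * (t - s) ^ (2 * (1 - γ)) * u ^ 2) :=
              le_mul_of_one_le_left hnn2 hC2
        _ = (2 ^ (k * γ + 2 * γ) * (1 + T) ^ (2 * γ)) * (t - s) ^ (2 * (1 - γ)) * u ^ 2 := by
            ring
  -- conclude from master
  rw [hr2k, Real.rpow_neg h1r.le, div_le_iff₀ (by positivity : (0:ℝ) < u ^ 2)]
  have heq : (2 ^ (k * γ + 2 * γ) * (1 + T) ^ (2 * γ)) * (t - s) ^ (2 * (1 - γ))
      * ((1 + r ^ 2) ^ (k * γ))⁻¹ * u ^ 2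
      = ((2 ^ (k * γ + 2 * γ) * (1 + T) ^ (2 * γ)) * (t - s) ^ (2 * (1 - γ)) * u ^ 2)
          / ((1 + r ^ 2) ^ (k * γ)) := by
    field_simp
  rw [heq, le_div_iff₀ hP]
  exact master

theorem stmt_16 (d : ℕ) (hd : 1 ≤ d) (k α γ T : ℝ) (hk : 0 < k) (hα : 0 ≤ α)
    (hγ : γ ∈ Set.Ico (0 : ℝ) 1) (hT : 0 < T) :
    ∃ C : ℝ, ∀ s t : ℝ, 0 ≤ s → s ≤ t → t ≤ T →
      ∀ g : EuclideanSpace ℝ (Fin d) → ℂ, Measurable g →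
        ∫⁻ ξ : EuclideanSpace ℝ (Fin d),
            ENNReal.ofReal ((1 + ‖ξ‖ ^ 2) ^ α *
              (Real.sin (t * ‖ξ‖ ^ k) - Real.sin (s * ‖ξ‖ ^ k)) ^ 2 / ‖ξ‖ ^ (2 * k) *
                ‖g ξ‖ ^ 2)
          ≤ ENNReal.ofReal (C * (t - s) ^ (2 * (1 - γ))) *
            ∫⁻ ξ : EuclideanSpace ℝ (Fin d),
              ENNReal.ofReal ((1 + ‖ξ‖ ^ 2) ^ (α - k * γ) * ‖g ξ‖ ^ 2) := by
  obtain ⟨hγ0, hγ1⟩ := hγ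
  refine ⟨2 ^ (k * γ + 2 * γ) * (1 + T) ^ (2 * γ), fun s t hs hst htT g hg => ?_⟩
  set C : ℝ := 2 ^ (k * γ + 2 * γ) * (1 + T) ^ (2 * γ) with hC_def
  have hts : 0 ≤ t - s := by linarith
  have hK : 0 ≤ C * (t - s) ^ (2 * (1 - γ)) := by positivity
  calc ∫⁻ ξ : EuclideanSpace ℝ (Fin d),
      ENNReal.ofReal ((1 + ‖ξ‖ ^ 2) ^ α *
        (Real.sin (t * ‖ξ‖ ^ k) - Real.sin (s * ‖ξ‖ ^ k)) ^ 2 / ‖ξ‖ ^ (2 * k) *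
          ‖g ξ‖ ^ 2)
      ≤ ∫⁻ ξ : EuclideanSpace ℝ (Fin d),
          ENNReal.ofReal ((C * (t - s) ^ (2 * (1 - γ))) *
            ((1 + ‖ξ‖ ^ 2) ^ (α - k * γ) * ‖g ξ‖ ^ 2)) := by
        apply lintegral_mono
        intro ξ
        apply ENNReal.ofReal_le_ofReal
        have hr : (0:ℝ) ≤ ‖ξ‖ := norm_nonneg _
        have h1r : (0:ℝ) < 1 + ‖ξ‖ ^ 2 := by positivity
        have hp := ptwise_est k γ T s t ‖ξ‖ hk hγ0 hγ1 hT hs hst htT hr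
        have hsum : (1 + ‖ξ‖ ^ 2) ^ α * (1 + ‖ξ‖ ^ 2) ^ (-(k * γ))
            = (1 + ‖ξ‖ ^ 2) ^ (α - k * γ) := by
          rw [← Real.rpow_add h1r, sub_eq_add_neg]
        have hstep : (1 + ‖ξ‖ ^ 2) ^ α *
            ((Real.sin (t * ‖ξ‖ ^ k) - Real.sin (s * ‖ξ‖ ^ k)) ^ 2 / ‖ξ‖ ^ (2 * k)) *
              ‖g ξ‖ ^ 2
            ≤ (1 + ‖ξ‖ ^ 2) ^ α *
              (C * (t - s) ^ (2 * (1 - γ)) * (1 + ‖ξ‖ ^ 2) ^ (-(k * γ))) * ‖g ξ‖ ^ 2 := by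
          have h1 : (0:ℝ) ≤ (1 + ‖ξ‖ ^ 2) ^ α := Real.rpow_nonneg h1r.le _
          have h2 : (0:ℝ) ≤ ‖g ξ‖ ^ 2 := by positivity
          exact mul_le_mul_of_nonneg_right (mul_le_mul_of_nonneg_left hp h1) h2
        calc (1 + ‖ξ‖ ^ 2) ^ α *
            (Real.sin (t * ‖ξ‖ ^ k) - Real.sin (s * ‖ξ‖ ^ k)) ^ 2 / ‖ξ‖ ^ (2 * k) *
              ‖g ξ‖ ^ 2
            = (1 + ‖ξ‖ ^ 2) ^ α *
              ((Real.sin (t * ‖ξ‖ ^ k) - Real.sin (s * ‖ξ‖ ^ k)) ^ 2 / ‖ξ‖ ^ (2 * k)) *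
                ‖g ξ‖ ^ 2 := by ring
          _ ≤ (1 + ‖ξ‖ ^ 2) ^ α *
              (C * (t - s) ^ (2 * (1 - γ)) * (1 + ‖ξ‖ ^ 2) ^ (-(k * γ))) * ‖g ξ‖ ^ 2 :=
              hstep
          _ = (C * (t - s) ^ (2 * (1 - γ))) *
              (((1 + ‖ξ‖ ^ 2) ^ α * (1 + ‖ξ‖ ^ 2) ^ (-(k * γ))) * ‖g ξ‖ ^ 2) := by ring
          _ = (C * (t - s) ^ (2 * (1 - γ))) *
              ((1 + ‖ξ‖ ^ 2) ^ (α - k * γ) * ‖g ξ‖ ^ 2) := by rw [hsum]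
    _ = ∫⁻ ξ : EuclideanSpace ℝ (Fin d),
          ENNReal.ofReal (C * (t - s) ^ (2 * (1 - γ))) *
            ENNReal.ofReal ((1 + ‖ξ‖ ^ 2) ^ (α - k * γ) * ‖g ξ‖ ^ 2) := by
        simp_rw [ENNReal.ofReal_mul hK]
    _ = ENNReal.ofReal (C * (t - s) ^ (2 * (1 - γ))) *
          ∫⁻ ξ : EuclideanSpace ℝ (Fin d),
            ENNReal.ofReal ((1 + ‖ξ‖ ^ 2) ^ (α - k * γ) * ‖g ξ‖ ^ 2) :=
        lintegral_const_mul' _ _ ENNReal.ofReal_ne_top
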